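/- Suppose L is generic and satisfies the triangle inequality. Then for any two vertices V and V′ of Γ(L), there is a path in Γ(L) of length at most 7 from V either to V′ or to the mirror image of V′. -/
import Mathlib


open Finset

/-- `I ⊆ [n]` is *short*: the sum of its lengths is less than that of its complement. -/
def ShortSet {n : ℕ} (L : Fin n → ℝ) (I : Finset (Fin n)) : Prop :=
  ∑ i ∈ I, L i < ∑ i ∈ Iᶜ, L i

/-- `I ⊆ [n]` is *long*: the sum of its lengths is greater than that of its complement. -/
def LongSet {n : ℕ} (L : Fin n → ℝ) (I : Finset (Fin n)) : Prop :=
  ∑ i ∈ Iᶜ, L i < ∑ i ∈ I, L i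

/-- The length vector `L` is *generic*. -/
def GenericVec {n : ℕ} (L : Fin n → ℝ) : Prop :=
  ∀ I : Finset (Fin n), ∑ i ∈ I, L i ≠ ∑ i ∈ Iᶜ, L i

/-- `L` satisfies the triangle inequality: every singleton is short. -/
def TriangleIneq {n : ℕ} (L : Fin n → ℝ) : Prop :=
  ∀ i : Fin n, ShortSet L {i}

/-- Ordered triples of subsets of `[n]`. -/
abbrev LTriple (n : ℕ) := Finset (Fin n) × Finset (Fin n) × Finset (Fin n)

/-- An ordered triple `(I, J, K)` representing a vertex of `Γ(L)`: three pairwise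
disjoint nonempty short sets whose union is `[n]`. -/
def IsVertex {n : ℕ} (L : Fin n → ℝ) (V : LTriple n) : Prop :=
  V.1.Nonempty ∧ V.2.1.Nonempty ∧ V.2.2.Nonempty ∧
  ShortSet L V.1 ∧ ShortSet L V.2.1 ∧ ShortSet L V.2.2 ∧
  Disjoint V.1 V.2.1 ∧ Disjoint V.1 V.2.2 ∧ Disjoint V.2.1 V.2.2 ∧
  V.1 ∪ V.2.1 ∪ V.2.2 = Finset.univ

/-- Cyclic rotation of an ordered triple. -/
def rotT {n : ℕ} (V : LTriple n) : LTriple n := (V.2.1, V.2.2, V.1)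

/-- Two ordered triples represent the same cyclically ordered partition
(`(I,J,K)`, `(J,K,I)` and `(K,I,J)` are identified). -/
def CyclEq {n : ℕ} (V W : LTriple n) : Prop :=
  W = V ∨ W = rotT V ∨ W = rotT (rotT V)

/-- The mirror image of the vertex `(I, J, K)` is the vertex `(J, I, K)`. -/
def mirrorT {n : ℕ} (V : LTriple n) : LTriple n := (V.2.1, V.1, V.2.2)

/-- The elementary move on representatives: shift a nonempty proper subset
`S ⊊ I` to the second part, provided `J ∪ S` stays short. -/
def MoveStep {n : ℕ} (L : Fin n → ℝ) (V W : LTriple n) : Prop :=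
  ∃ S : Finset (Fin n), S.Nonempty ∧ S ⊂ V.1 ∧ ShortSet L (V.2.1 ∪ S) ∧
    W = (V.1 \ S, V.2.1 ∪ S, V.2.2)

/-- Adjacency in `Γ(L)`: one of the two vertices has a representative from which an
elementary move leads to a representative of the other. -/
def GammaAdj {n : ℕ} (L : Fin n → ℝ) (V W : LTriple n) : Prop :=
  (∃ V' W' : LTriple n, CyclEq V V' ∧ MoveStep L V' W' ∧ CyclEq W W') ∨
  (∃ W' V' : LTriple n, CyclEq W W' ∧ MoveStep L W' V' ∧ CyclEq V V')

/-- There is a path of length `m` (i.e. with `m` consecutive edges) in `Γ(L)`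
from the vertex `V` to the vertex `W`. -/
def GammaPath {n : ℕ} (L : Fin n → ℝ) (m : ℕ) (V W : LTriple n) : Prop :=
  ∃ f : ℕ → LTriple n, CyclEq V (f 0) ∧ CyclEq W (f m) ∧
    (∀ i ≤ m, IsVertex L (f i)) ∧ ∀ i < m, GammaAdj L (f i) (f (i + 1))


section Infra
variable {n : ℕ} {L : Fin n → ℝ}

lemma rot3 (V : LTriple n) : rotT (rotT (rotT V)) = V := rfl

lemma ceq_refl (V : LTriple n) : CyclEq V V := Or.inl rfl

lemma ceq_rot (V : LTriple n) : CyclEq V (rotT V) := Or.inr (Or.inl rfl)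

lemma ceq_rot2 (V : LTriple n) : CyclEq V (rotT (rotT V)) := Or.inr (Or.inr rfl)

lemma ceq_symm {V W : LTriple n} (h : CyclEq V W) : CyclEq W V := by
  obtain ⟨a, b, c⟩ := V
  rcases h with rfl | rfl | rfl
  · exact ceq_refl _
  · exact Or.inr (Or.inr rfl)
  · exact Or.inr (Or.inl rfl)

lemma ceq_trans {U V W : LTriple n} (h1 : CyclEq U V) (h2 : CyclEq V W) : CyclEq U W := by
  obtain ⟨a, b, c⟩ := U
  rcases h1 with rfl | rfl | rfl
  · exact h2
  · rcases h2 with rfl | rfl | rfl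
    · exact Or.inr (Or.inl rfl)
    · exact Or.inr (Or.inr rfl)
    · exact Or.inl rfl
  · rcases h2 with rfl | rfl | rfl
    · exact Or.inr (Or.inr rfl)
    · exact Or.inl rfl
    · exact Or.inr (Or.inl rfl)

lemma vertex_rot {V : LTriple n} (h : IsVertex L V) : IsVertex L (rotT V) := by
  obtain ⟨a, b, c⟩ := V
  obtain ⟨n1, n2, n3, s1, s2, s3, d12, d13, d23, hu⟩ := h
  refine ⟨n2, n3, n1, s2, s3, s1, d23, d12.symm, d13.symm, ?_⟩
  rw [← hu]; ext x; simp [rotT]; tauto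

lemma vertex_ceq {V W : LTriple n} (h : CyclEq V W) (hV : IsVertex L V) : IsVertex L W := by
  rcases h with rfl | rfl | rfl
  · exact hV
  · exact vertex_rot hV
  · exact vertex_rot (vertex_rot hV)

lemma vertex_mirror {V : LTriple n} (h : IsVertex L V) : IsVertex L (mirrorT V) := by
  obtain ⟨a, b, c⟩ := V
  obtain ⟨n1, n2, n3, s1, s2, s3, d12, d13, d23, hu⟩ := h
  refine ⟨n2, n1, n3, s2, s1, s3, d12.symm, d23, d13, ?_⟩
  rw [← hu]; ext x; simp [mirrorT]; tauto

lemma ceq_mirror {V W : LTriple n} (h : CyclEq V W) : CyclEq (mirrorT V) (mirrorT W) := by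
  obtain ⟨a, b, c⟩ := V
  rcases h with rfl | rfl | rfl
  · exact ceq_refl _
  · exact Or.inr (Or.inr rfl)
  · exact Or.inr (Or.inl rfl)

lemma adj_symm {V W : LTriple n} (h : GammaAdj L V W) : GammaAdj L W V := by
  rcases h with ⟨V', W', h1, h2, h3⟩ | ⟨W', V', h1, h2, h3⟩
  · exact Or.inr ⟨V', W', h1, h2, h3⟩
  · exact Or.inl ⟨W', V', h1, h2, h3⟩

lemma adj_congr {X X' Y Y' : LTriple n} (hX : CyclEq X X') (hY : CyclEq Y Y')
    (h : GammaAdj L X Y) : GammaAdj L X' Y' := by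
  rcases h with ⟨V', W', h1, h2, h3⟩ | ⟨W', V', h1, h2, h3⟩
  · exact Or.inl ⟨V', W', ceq_trans (ceq_symm hX) h1, h2, ceq_trans (ceq_symm hY) h3⟩
  · exact Or.inr ⟨W', V', ceq_trans (ceq_symm hY) h1, h2, ceq_trans (ceq_symm hX) h3⟩

end Infra

section Paths
variable {n : ℕ} {L : Fin n → ℝ}

lemma path0 {V : LTriple n} (h : IsVertex L V) : GammaPath L 0 V V :=
  ⟨fun _ => V, ceq_refl V, ceq_refl V, fun _ _ => h, fun i hi => absurd hi (Nat.not_lt_zero i)⟩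

lemma path_congr {V V' W W' : LTriple n} (hV : CyclEq V V') (hW : CyclEq W W') {m : ℕ}
    (h : GammaPath L m V' W') : GammaPath L m V W := by
  obtain ⟨f, h0, h1, h2, h3⟩ := h
  exact ⟨f, ceq_trans hV h0, ceq_trans hW h1, h2, h3⟩

lemma path_snoc {V X Y : LTriple n} {m : ℕ} (hp : GammaPath L m V X)
    (hY : IsVertex L Y) (hadj : GammaAdj L X Y) : GammaPath L (m + 1) V Y := by
  obtain ⟨f, h0, h1, h2, h3⟩ := hp
  refine ⟨fun i => if i ≤ m then f i else Y, ?_, ?_, ?_, ?_⟩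
  · simpa using h0
  · have : ¬ (m + 1 ≤ m) := by omega
    simpa [this] using ceq_refl Y
  · intro i hi
    by_cases h : i ≤ m
    · simpa [h] using h2 i h
    · simpa [h] using hY
  · intro i hi
    rcases Nat.lt_succ_iff_lt_or_eq.mp hi with h | rfl
    · have : i + 1 ≤ m := h
      simpa [Nat.le_of_lt h, this] using h3 i h
    · have : ¬ (i + 1 ≤ i) := by omega
      simpa [le_refl, this] using adj_congr h1 (ceq_refl Y) hadj

lemma path_trans {V X W : LTriple n} {a b : ℕ} (h1 : GammaPath L a V X)
    (h2 : GammaPath L b X W) : GammaPath L (a + b) V W := by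
  obtain ⟨f, f0, f1, f2, f3⟩ := h1
  obtain ⟨g, g0, g1, g2, g3⟩ := h2
  rcases Nat.eq_zero_or_pos a with rfl | ha
  · exact ⟨g, ceq_trans f0 (ceq_trans (ceq_symm f1) g0), by simpa using g1, by simpa using g2,
      by simpa using g3⟩
  refine ⟨fun i => if i < a then f i else g (i - a), ?_, ?_, ?_, ?_⟩
  · simpa [ha] using f0
  · have : ¬ (a + b < a) := by omega
    simpa [this] using g1
  · intro i hi
    by_cases h : i < a
    · simpa [h] using f2 i (Nat.le_of_lt h)
    · have : i - a ≤ b := by omega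
      simpa [h] using g2 _ this
  · intro i hi
    by_cases h : i + 1 < a
    · have h' : i < a := by omega
      simpa [h, h'] using f3 i h'
    · by_cases h' : i < a
      · have hia : i + 1 = a := by omega
        have e1 : GammaAdj L (f i) (f a) := by
          have := f3 i (by omega); rwa [hia] at this
        have : GammaAdj L (f i) (g 0) :=
          adj_congr (ceq_refl _) (ceq_trans (ceq_symm f1) g0) e1
        simpa [h, h', hia] using this
      · have e : i + 1 - a = (i - a) + 1 := by omega
        have : GammaAdj L (g (i - a)) (g (i - a + 1)) := g3 _ (by omega)
        simpa [h, h', e] using this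

lemma path_symm {V W : LTriple n} {m : ℕ} (h : GammaPath L m V W) : GammaPath L m W V := by
  obtain ⟨f, h0, h1, h2, h3⟩ := h
  refine ⟨fun i => f (m - i), by simpa using h1, by simpa using h0, fun i hi => h2 _ (by omega),
    fun i hi => ?_⟩
  have e1 : m - i = (m - (i+1)) + 1 := by omega
  have := adj_symm (h3 (m - (i + 1)) (by omega))
  rwa [← e1] at this

lemma adj_mirror {V W : LTriple n} (hV : IsVertex L V) (hW : IsVertex L W)
    (h : GammaAdj L V W) : GammaAdj L (mirrorT V) (mirrorT W) := by
  have key : ∀ V' W' : LTriple n, IsVertex L V' → MoveStep L V' W' →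
      MoveStep L (mirrorT W') (mirrorT V') := by
    rintro ⟨I, J, K⟩ W' hvert ⟨S, hne, hsub, hsh, rfl⟩
    have hSI : S ⊆ I := hsub.subset
    have hdJ : Disjoint S J := Finset.disjoint_of_subset_left hSI hvert.2.2.2.2.2.2.1
    refine ⟨S, hne, ?_, ?_, ?_⟩
    · show S ⊂ J ∪ S
      constructor
      · exact Finset.subset_union_right
      · intro hss
        obtain ⟨x, hx⟩ := hvert.2.1
        have : x ∈ S := hss (Finset.mem_union_left _ hx)
        exact (Finset.disjoint_left.mp hdJ this) hx
    · show ShortSet L ((I \ S) ∪ S)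
      rw [Finset.sdiff_union_of_subset hSI]
      exact hvert.2.2.2.1
    · show (J, I, K) = ((J ∪ S) \ S, (I \ S) ∪ S, K)
      rw [Finset.sdiff_union_of_subset hSI, Finset.union_sdiff_cancel_right hdJ.symm]
  rcases h with ⟨V', W', h1, h2, h3⟩ | ⟨W', V', h1, h2, h3⟩
  · exact Or.inr ⟨mirrorT W', mirrorT V', ceq_mirror h3, key _ _ (vertex_ceq h1 hV) h2,
      ceq_mirror h1⟩
  · exact Or.inl ⟨mirrorT V', mirrorT W', ceq_mirror h3, key _ _ (vertex_ceq h1 hW) h2,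
      ceq_mirror h1⟩

lemma path_mirror {V W : LTriple n} {m : ℕ} (h : GammaPath L m V W) :
    GammaPath L m (mirrorT V) (mirrorT W) := by
  obtain ⟨f, h0, h1, h2, h3⟩ := h
  exact ⟨fun i => mirrorT (f i), ceq_mirror h0, ceq_mirror h1,
    fun i hi => vertex_mirror (h2 i hi), fun i hi =>
      adj_mirror (h2 i (by omega)) (h2 (i+1) (by omega)) (h3 i hi)⟩

end Paths

section Arith
variable {n : ℕ} {L : Fin n → ℝ}

lemma short_iff (X : Finset (Fin n)) :
    ShortSet L X ↔ 2 * ∑ i ∈ X, L i < ∑ i, L i := by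
  have h := Finset.sum_add_sum_compl X L
  unfold ShortSet
  constructor <;> intro hh <;> linarith

lemma gen_ne (hgen : GenericVec L) (X : Finset (Fin n)) :
    2 * ∑ i ∈ X, L i ≠ ∑ i, L i := by
  intro h
  have hc := Finset.sum_add_sum_compl X L
  exact hgen X (by linarith)

lemma short_or (hgen : GenericVec L) (X : Finset (Fin n)) :
    ShortSet L X ∨ ∑ i, L i < 2 * ∑ i ∈ X, L i := by
  rcases lt_or_gt_of_ne (gen_ne hgen X) with h | h
  · exact Or.inl ((short_iff X).mpr h)
  · exact Or.inr h

lemma short_subset (hpos : ∀ i, 0 < L i) {X Y : Finset (Fin n)} (hXY : X ⊆ Y)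
    (hY : ShortSet L Y) : ShortSet L X := by
  rw [short_iff] at hY ⊢
  have : ∑ i ∈ X, L i ≤ ∑ i ∈ Y, L i :=
    Finset.sum_le_sum_of_subset_of_nonneg hXY (fun i _ _ => le_of_lt (hpos i))
  linarith

/-- Interval-hitting lemma: prefix-type argument. -/
lemma exists_subset_between (T : Finset (Fin n)) (α β : ℝ)
    (hstep : ∀ t ∈ T, L t ≤ β - α)
    (hhit : ∀ P ⊆ T, (∑ i ∈ P, L i ≠ α ∧ ∑ i ∈ P, L i ≠ β))
    (hβ : 0 < β) (hα : α < ∑ i ∈ T, L i) :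
    ∃ P ⊆ T, α < ∑ i ∈ P, L i ∧ ∑ i ∈ P, L i < β := by
  suffices H : ∀ (k : ℕ) (T : Finset (Fin n)) (α β : ℝ), T.card = k →
      (∀ t ∈ T, L t ≤ β - α) → (∀ P ⊆ T, (∑ i ∈ P, L i ≠ α ∧ ∑ i ∈ P, L i ≠ β)) →
      0 < β → α < ∑ i ∈ T, L i →
      ∃ P ⊆ T, α < ∑ i ∈ P, L i ∧ ∑ i ∈ P, L i < β by
    exact H T.card T α β rfl hstep hhit hβ hα
  intro k
  induction k with
  | zero =>
    intro T α β hcard _ _ hβ hα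
    rw [Finset.card_eq_zero.mp hcard, Finset.sum_empty] at hα
    exact ⟨∅, Finset.empty_subset T, by simpa using hα, by simpa using hβ⟩
  | succ k ih =>
    intro T α β hcard hstep hhit hβ hα
    by_cases hα0 : α < 0
    · exact ⟨∅, Finset.empty_subset T, by simpa using hα0, by simpa using hβ⟩
    have hαpos : 0 < α := by
      rcases lt_or_eq_of_le (not_lt.mp hα0) with h | h
      · exact h
      · exact absurd h (by simpa using (hhit ∅ (Finset.empty_subset T)).1)
    have hTne : T.Nonempty := Finset.card_pos.mp (by omega)
    obtain ⟨t, ht⟩ := hTne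
    have hLt : L t ≤ β - α := hstep t ht
    obtain ⟨P', hP'sub, h1, h2⟩ := ih (T.erase t) (α - L t) (β - L t)
      (by rw [Finset.card_erase_of_mem ht, hcard]; rfl)
      (fun t' ht' => by
        have := hstep t' (Finset.mem_of_mem_erase ht')
        linarith)
      (fun P hP => by
        have htP : t ∉ P := fun h => (Finset.notMem_erase t T) (hP h)
        have hins : insert t P ⊆ T := Finset.insert_subset ht
          (hP.trans (Finset.erase_subset t T))
        have hsum : ∑ i ∈ insert t P, L i = L t + ∑ i ∈ P, L i := Finset.sum_insert htP
        obtain ⟨ha, hb⟩ := hhit (insert t P) hins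
        constructor
        · intro h; exact ha (by rw [hsum, h]; ring)
        · intro h; exact hb (by rw [hsum, h]; ring))
      (by linarith)
      (by
        have := Finset.add_sum_erase T L ht
        linarith)
    have htP' : t ∉ P' := fun h => (Finset.notMem_erase t T) (hP'sub h)
    refine ⟨insert t P', Finset.insert_subset ht (hP'sub.trans (Finset.erase_subset t T)), ?_, ?_⟩
    · rw [Finset.sum_insert htP']; linarith
    · rw [Finset.sum_insert htP']; linarith

end Arith

section AdjHelpers
variable {n : ℕ} {L : Fin n → ℝ}

lemma adj_fwd' {X Y : LTriple n} {S : Finset (Fin n)} (hne : S.Nonempty) (X' : LTriple n)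
    (hXrep : CyclEq X X') (hsub : S ⊂ X'.1) (hsh : ShortSet L (X'.2.1 ∪ S))
    (hY : CyclEq Y (X'.1 \ S, X'.2.1 ∪ S, X'.2.2)) : GammaAdj L X Y :=
  Or.inl ⟨X', _, hXrep, ⟨S, hne, hsub, hsh, rfl⟩, hY⟩

lemma adj_rev' {X Y : LTriple n} {S : Finset (Fin n)} (hne : S.Nonempty) (Y' : LTriple n)
    (hYrep : CyclEq Y Y') (hsub : S ⊂ Y'.1) (hsh : ShortSet L (Y'.2.1 ∪ S))
    (hX : CyclEq X (Y'.1 \ S, Y'.2.1 ∪ S, Y'.2.2)) : GammaAdj L X Y :=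
  Or.inr ⟨Y', _, hYrep, ⟨S, hne, hsub, hsh, rfl⟩, hX⟩

end AdjHelpers

section Reach
variable {n : ℕ} {L : Fin n → ℝ}

/-- From any vertex whose first part contains the maximal index `m`, one can reach,
in at most 2 moves, a vertex whose first part is exactly `{m}`. -/
lemma reach_m (hpos : ∀ i, 0 < L i) (hgen : GenericVec L) (htri : TriangleIneq L)
    {m : Fin n} (hm : ∀ i, L i ≤ L m) {I J K : Finset (Fin n)}
    (hV : IsVertex L (I, J, K)) (hmI : m ∈ I) :
    ∃ (c : ℕ) (J₁ K₁ : Finset (Fin n)), c ≤ 2 ∧ IsVertex L ({m}, J₁, K₁) ∧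
      GammaPath L c (I, J, K) ({m}, J₁, K₁) := by
  obtain ⟨hIne, hJne, hKne, hIs, hJs, hKs, dIJ, dIK, dJK, hu⟩ := hV
  have hV : IsVertex L (I, J, K) := ⟨hIne, hJne, hKne, hIs, hJs, hKs, dIJ, dIK, dJK, hu⟩
  set T := I.erase m with hT
  have hTI : T ⊆ I := Finset.erase_subset m I
  have hmT : m ∉ T := Finset.notMem_erase m I
  have idI : {m} ∪ T = I := by
    ext x
    simp only [Finset.mem_union, Finset.mem_singleton, hT, Finset.mem_erase]
    constructor
    · rintro (rfl | ⟨_, h⟩)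
      · exact hmI
      · exact h
    · intro h
      by_cases hx : x = m
      · exact Or.inl hx
      · exact Or.inr ⟨hx, h⟩
  by_cases hTe : T = ∅
  · have hIm : I = {m} := by rw [← idI, hTe, Finset.union_empty]
    have hV' : IsVertex L ({m}, J, K) := by rw [← hIm]; exact hV
    rw [hIm]
    exact ⟨0, J, K, by omega, hV', path0 hV'⟩
  have hTne : T.Nonempty := Finset.nonempty_of_ne_empty hTe
  -- sum bookkeeping
  have hsum : ∑ i, L i = ∑ i ∈ I, L i + ∑ i ∈ J, L i + ∑ i ∈ K, L i := by
    rw [← hu, Finset.sum_union (Finset.disjoint_union_left.mpr ⟨dIK, dJK⟩),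
      Finset.sum_union dIJ]
  have hwI : ∑ i ∈ I, L i = L m + ∑ i ∈ T, L i := (Finset.add_sum_erase I L hmI).symm
  have hIs' := (short_iff (L := L) I).mp hIs
  have hJs' := (short_iff (L := L) J).mp hJs
  have hKs' := (short_iff (L := L) K).mp hKs
  -- the interval-hitting argument
  obtain ⟨T1, hT1T, hT1a, hT1b⟩ := exists_subset_between (L := L) T
    (∑ i ∈ T, L i + ∑ i ∈ K, L i - (∑ i, L i) / 2) ((∑ i, L i) / 2 - ∑ i ∈ J, L i)
    (fun t ht => by have := hm t; linarith)
    (fun P hP => by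
      have hPI : P ⊆ I := hP.trans hTI
      have hdJP : Disjoint J P := (Finset.disjoint_of_subset_left hPI dIJ).symm
      have hdKP : Disjoint K (T \ P) :=
        (Finset.disjoint_of_subset_left ((Finset.sdiff_subset).trans hTI) dIK).symm
      have hsd : ∑ i ∈ T \ P, L i + ∑ i ∈ P, L i = ∑ i ∈ T, L i := Finset.sum_sdiff hP
      constructor
      · intro h
        apply gen_ne hgen (K ∪ (T \ P))
        rw [Finset.sum_union hdKP]; linarith
      · intro h
        apply gen_ne hgen (J ∪ P)
        rw [Finset.sum_union hdJP]; linarith)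
    (by linarith) (by linarith)
  set T2 := T \ T1 with hT2
  have hT2T : T2 ⊆ T := Finset.sdiff_subset
  have hsd : ∑ i ∈ T2, L i + ∑ i ∈ T1, L i = ∑ i ∈ T, L i := Finset.sum_sdiff hT1T
  have hT1I : T1 ⊆ I := hT1T.trans hTI
  have hT2I : T2 ⊆ I := hT2T.trans hTI
  have hmT1 : m ∉ T1 := fun h => hmT (hT1T h)
  have hmT2 : m ∉ T2 := fun h => hmT (hT2T h)
  have hdJT1 : Disjoint J T1 := (Finset.disjoint_of_subset_left hT1I dIJ).symm
  have hdKT2 : Disjoint K T2 := (Finset.disjoint_of_subset_left hT2I dIK).symm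
  have hJT1s : ShortSet L (J ∪ T1) := by
    rw [short_iff, Finset.sum_union hdJT1]; linarith
  have hKT2s : ShortSet L (K ∪ T2) := by
    rw [short_iff, Finset.sum_union hdKT2]; linarith
  have hmm : m ∉ J := Finset.disjoint_left.mp dIJ hmI
  have hmk : m ∉ K := Finset.disjoint_left.mp dIK hmI
  have hall : ∀ x, x = m ∨ (x ∈ J ∨ x ∈ T1) ∨ x ∈ K ∨ x ∈ T2 := by
    intro x
    have hx : x ∈ I ∪ J ∪ K := hu ▸ Finset.mem_univ x
    simp only [Finset.mem_union] at hx
    rcases hx with (hx | hx) | hx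
    · rw [← idI] at hx
      simp only [Finset.mem_union, Finset.mem_singleton] at hx
      rcases hx with hx | hx
      · tauto
      · by_cases h1 : x ∈ T1
        · tauto
        · have : x ∈ T2 := Finset.mem_sdiff.mpr ⟨hx, h1⟩
          tauto
    · tauto
    · tauto
  -- the target vertex
  have hP2 : IsVertex L ({m}, J ∪ T1, K ∪ T2) := by
    refine ⟨Finset.singleton_nonempty m, hJne.mono Finset.subset_union_left,
      hKne.mono Finset.subset_union_left, htri m, hJT1s, hKT2s, ?_, ?_, ?_, ?_⟩
    · simp [Finset.disjoint_singleton_left, hmm, hmT1]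
    · simp [Finset.disjoint_singleton_left, hmk, hmT2]
    · rw [Finset.disjoint_union_left, Finset.disjoint_union_right, Finset.disjoint_union_right]
      exact ⟨⟨dJK, Finset.disjoint_of_subset_right hT2I dIJ.symm⟩,
        ⟨(Finset.disjoint_of_subset_left hT1I dIK), Finset.disjoint_sdiff⟩⟩
    · apply Finset.eq_univ_iff_forall.mpr
      intro x
      have hx := hall x
      simp only [Finset.mem_union, Finset.mem_singleton]
      tauto
  by_cases hT1e : T1 = ∅
  · -- one reverse move: T goes to K
    have hKT : K ∪ T2 = K ∪ T := by rw [hT2, hT1e, Finset.sdiff_empty]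
    have hJT : J ∪ T1 = J := by rw [hT1e, Finset.union_empty]
    rw [hKT, hJT] at hP2
    rw [hKT] at hKT2s
    refine ⟨1, J, K ∪ T, by omega, hP2, path_snoc (path0 hV) hP2 ?_⟩
    refine adj_rev' hTne (K ∪ T, {m}, J) (ceq_rot2 _) ?_ ?_ ?_
    · have hdKT : Disjoint K T := (Finset.disjoint_of_subset_left hTI dIK).symm
      exact ⟨Finset.subset_union_right, fun h => by
        obtain ⟨x, hx⟩ := hKne
        exact Finset.disjoint_left.mp hdKT hx (h (Finset.mem_union_left _ hx))⟩
    · show ShortSet L ({m} ∪ T)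
      rw [idI]; exact hIs
    · show CyclEq (I, J, K) ((K ∪ T) \ T, {m} ∪ T, J)
      rw [idI, Finset.union_sdiff_cancel_right (Finset.disjoint_of_subset_right hTI dIK.symm)]
      exact ceq_rot2 _
  by_cases hT2e : T2 = ∅
  · -- one forward move: T goes to J
    have hT1 : T1 = T := by
      have := Finset.sdiff_eq_empty_iff_subset.mp hT2e
      exact Finset.Subset.antisymm hT1T this
    subst hT1
    rw [hT2e, Finset.union_empty] at hP2 hKT2s
    refine ⟨1, J ∪ T, K, by omega, hP2, path_snoc (path0 hV) hP2 ?_⟩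
    refine adj_fwd' hTne (I, J, K) (ceq_refl _) ?_ hJT1s ?_
    · exact ⟨hTI, fun h => hmT (h hmI)⟩
    · show CyclEq ({m}, J ∪ T, K) (I \ T, J ∪ T, K)
      have : I \ T = {m} := by
        rw [← idI, Finset.union_sdiff_cancel_right (Finset.disjoint_singleton_left.mpr hmT)]
      rw [this]; exact ceq_refl _
  -- two moves
  have hT1ne : T1.Nonempty := Finset.nonempty_of_ne_empty hT1e
  have hT2ne : T2.Nonempty := Finset.nonempty_of_ne_empty hT2e
  have hIT1 : I \ T1 = {m} ∪ T2 := by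
    ext x
    simp only [Finset.mem_sdiff, Finset.mem_union, Finset.mem_singleton, hT2, ← idI]
    constructor
    · rintro ⟨(rfl | hx), hx1⟩
      · exact Or.inl rfl
      · exact Or.inr ⟨hx, hx1⟩
    · rintro (rfl | ⟨hx, hx1⟩)
      · exact ⟨Or.inl rfl, hmT1⟩
      · exact ⟨Or.inr hx, hx1⟩
  have hP1 : IsVertex L ({m} ∪ T2, J ∪ T1, K) := by
    refine ⟨⟨m, Finset.mem_union_left _ (Finset.mem_singleton_self m)⟩,
      hJne.mono Finset.subset_union_left, hKne,
      ?_, hJT1s, hKs, ?_, ?_, ?_, ?_⟩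
    · apply short_subset hpos _ hIs
      rw [← idI]
      exact Finset.union_subset_union_right hT2T
    · rw [Finset.disjoint_union_left, Finset.disjoint_union_right, Finset.disjoint_union_right]
      constructor
      · exact ⟨Finset.disjoint_singleton_left.mpr hmm, Finset.disjoint_singleton_left.mpr hmT1⟩
      · exact ⟨Finset.disjoint_of_subset_left hT2I dIJ, Finset.disjoint_sdiff.symm⟩
    · rw [Finset.disjoint_union_left]
      exact ⟨Finset.disjoint_singleton_left.mpr hmk, Finset.disjoint_of_subset_left hT2I dIK⟩
    · rw [Finset.disjoint_union_left]
      exact ⟨dJK, Finset.disjoint_of_subset_left hT1I dIK⟩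
    · apply Finset.eq_univ_iff_forall.mpr
      intro x
      have hx := hall x
      simp only [Finset.mem_union, Finset.mem_singleton]
      tauto
  refine ⟨2, J ∪ T1, K ∪ T2, le_refl 2, hP2, path_snoc (path_snoc (path0 hV) hP1 ?_) hP2 ?_⟩
  · -- edge 1 : move T1 from I to J
    refine adj_fwd' hT1ne (I, J, K) (ceq_refl _) ?_ hJT1s ?_
    · exact ⟨hT1I, fun h => hmT1 (h hmI)⟩
    · show CyclEq ({m} ∪ T2, J ∪ T1, K) (I \ T1, J ∪ T1, K)
      rw [hIT1]; exact ceq_refl _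
  · -- edge 2 : move T2 from first part to K, reverse move
    refine adj_rev' hT2ne (K ∪ T2, {m}, J ∪ T1) (ceq_rot2 _) ?_ ?_ ?_
    · exact ⟨Finset.subset_union_right, fun h => by
        obtain ⟨x, hx⟩ := hKne
        exact Finset.disjoint_left.mp hdKT2 hx (h (Finset.mem_union_left _ hx))⟩
    · show ShortSet L ({m} ∪ T2)
      apply short_subset hpos _ hIs
      rw [← idI]
      exact Finset.union_subset_union_right hT2T
    · show CyclEq ({m} ∪ T2, J ∪ T1, K) ((K ∪ T2) \ T2, {m} ∪ T2, J ∪ T1)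
      rw [Finset.union_sdiff_cancel_right hdKT2]
      exact ceq_rot2 _


section Link
variable {n : ℕ} {L : Fin n → ℝ}

lemma ssub_of_union {X Y Z : Finset (Fin n)} (h : X ∪ Y = Z) (hX : X.Nonempty)
    (hd : Disjoint X Y) : Y ⊂ Z := by
  constructor
  · exact h ▸ Finset.subset_union_right
  · intro hs
    obtain ⟨x, hx⟩ := hX
    have hxZ : x ∈ Z := h ▸ Finset.mem_union_left _ hx
    exact Finset.disjoint_left.mp hd hx (hs hxZ)

set_option maxHeartbeats 2000000 in
/-- Any two vertices with first part `{m}` are within 3 moves of each other,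
up to mirror image. -/
lemma link_m (hpos : ∀ i, 0 < L i) (hgen : GenericVec L) (htri : TriangleIneq L)
    {m : Fin n} {J K J' K' : Finset (Fin n)}
    (hV : IsVertex L ({m}, J, K)) (hW : IsVertex L ({m}, J', K')) :
    ∃ c ≤ 3, GammaPath L c ({m}, J, K) ({m}, J', K') ∨
      GammaPath L c ({m}, J, K) ({m}, K', J') := by
  obtain ⟨-, hJne, hKne, -, hJs, hKs, dmJ, dmK, dJK, hu⟩ := hV
  obtain ⟨-, hJ'ne, hK'ne, -, hJ's, hK's, dmJ', dmK', dJ'K', hu'⟩ := hW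
  have hV : IsVertex L ({m}, J, K) :=
    ⟨Finset.singleton_nonempty m, hJne, hKne, htri m, hJs, hKs, dmJ, dmK, dJK, hu⟩
  have hW : IsVertex L ({m}, J', K') :=
    ⟨Finset.singleton_nonempty m, hJ'ne, hK'ne, htri m, hJ's, hK's, dmJ', dmK', dJ'K', hu'⟩
  simp only [Finset.disjoint_singleton_left] at dmJ dmK dmJ' dmK'
  set A := J ∩ J' with hA
  set B := J ∩ K' with hB
  set C := K ∩ J' with hC
  set D := K ∩ K' with hD
  have huV : ∀ x, x = m ∨ x ∈ J ∨ x ∈ K := by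
    intro x
    have hx : x ∈ {m} ∪ J ∪ K := hu ▸ Finset.mem_univ x
    simpa [Finset.mem_union, Finset.mem_singleton, or_assoc] using hx
  have huW : ∀ x, x = m ∨ x ∈ J' ∨ x ∈ K' := by
    intro x
    have hx : x ∈ {m} ∪ J' ∪ K' := hu' ▸ Finset.mem_univ x
    simpa [Finset.mem_union, Finset.mem_singleton, or_assoc] using hx
  have key : ∀ P Q R : Finset (Fin n), (∀ x, x = m ∨ x ∈ Q ∨ x ∈ R) → m ∉ P →
      P ∩ Q ∪ P ∩ R = P := by
    intro P Q R hQR hmP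
    ext x
    simp only [Finset.mem_union, Finset.mem_inter]
    constructor
    · tauto
    · intro hx
      rcases hQR x with rfl | h | h
      · exact absurd hx hmP
      · tauto
      · tauto
  have eJ : A ∪ B = J := key J J' K' huW dmJ
  have eK : C ∪ D = K := key K J' K' huW dmK
  have eJ' : A ∪ C = J' := by
    have := key J' J K huV dmJ'
    rwa [Finset.inter_comm J' J, Finset.inter_comm J' K] at this
  have eK' : B ∪ D = K' := by
    have := key K' J K huV dmK'
    rwa [Finset.inter_comm K' J, Finset.inter_comm K' K] at this
  -- disjointness of the four pieces
  have dAB : Disjoint A B := dJ'K'.mono Finset.inter_subset_right Finset.inter_subset_right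
  have dCD : Disjoint C D := dJ'K'.mono Finset.inter_subset_right Finset.inter_subset_right
  have dAC : Disjoint A C := dJK.mono Finset.inter_subset_left Finset.inter_subset_left
  have dAD : Disjoint A D := dJK.mono Finset.inter_subset_left Finset.inter_subset_left
  have dBC : Disjoint B C := dJK.mono Finset.inter_subset_left Finset.inter_subset_left
  have dBD : Disjoint B D := dJK.mono Finset.inter_subset_left Finset.inter_subset_left
  have hmA : m ∉ A := fun h => dmJ (Finset.inter_subset_left h)
  have hmB : m ∉ B := fun h => dmJ (Finset.inter_subset_left h)
  have hmC : m ∉ C := fun h => dmK (Finset.inter_subset_left h)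
  have hmD : m ∉ D := fun h => dmK (Finset.inter_subset_left h)
  have hall : ∀ x, x = m ∨ x ∈ A ∨ x ∈ B ∨ x ∈ C ∨ x ∈ D := by
    intro x
    rcases huV x with rfl | h | h
    · tauto
    · rw [← eJ] at h; simp only [Finset.mem_union] at h; tauto
    · rw [← eK] at h; simp only [Finset.mem_union] at h; tauto
  have hAJ : A ⊆ J := Finset.inter_subset_left
  have hBJ : B ⊆ J := Finset.inter_subset_left
  have hCK : C ⊆ K := Finset.inter_subset_left
  have hDK : D ⊆ K := Finset.inter_subset_left
  by_cases hBe : B = ∅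
  · by_cases hCe : C = ∅
    · -- identical vertices
      have h1 : J = J' := by rw [← eJ, ← eJ', hBe, hCe]
      have h2 : K = K' := by rw [← eK, ← eK', hBe, hCe]
      rw [← h1, ← h2]
      exact ⟨0, by omega, Or.inl (path0 hV)⟩
    · -- one move : move C from K to J
      have hAne : A.Nonempty := by
        rw [← eJ, hBe, Finset.union_empty] at hJne; exact hJne
      have hCne : C.Nonempty := Finset.nonempty_of_ne_empty hCe
      have idJ'C : J' \ C = J := by
        rw [← eJ', Finset.union_sdiff_cancel_right dAC, ← eJ, hBe, Finset.union_empty]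
      have idK'C : K' ∪ C = K := by
        rw [← eK', hBe, Finset.empty_union, Finset.union_comm, eK]
      refine ⟨1, by omega, Or.inl (path_snoc (path0 hV) hW ?_)⟩
      refine adj_rev' hCne (J', K', {m}) (ceq_rot _) ?_ ?_ ?_
      · exact ssub_of_union eJ' hAne dAC
      · show ShortSet L (K' ∪ C)
        rw [idK'C]; exact hKs
      · show CyclEq ({m}, J, K) (J' \ C, K' ∪ C, {m})
        rw [idJ'C, idK'C]; exact ceq_rot _
  by_cases hCe : C = ∅
  · -- one move : move B from J to K
    have hAne : A.Nonempty := by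
      rw [← eJ', hCe, Finset.union_empty] at hJ'ne; exact hJ'ne
    have hBne : B.Nonempty := Finset.nonempty_of_ne_empty hBe
    have idJB : J \ B = J' := by
      rw [← eJ, Finset.union_sdiff_cancel_right dAB, ← eJ', hCe, Finset.union_empty]
    have idKB : K ∪ B = K' := by
      rw [← eK, hCe, Finset.empty_union, Finset.union_comm, eK']
    refine ⟨1, by omega, Or.inl (path_snoc (path0 hV) hW ?_)⟩
    refine adj_fwd' hBne (J, K, {m}) (ceq_rot _) ?_ ?_ ?_
    · exact ssub_of_union eJ hAne dAB
    · show ShortSet L (K ∪ B)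
      rw [idKB]; exact hK's
    · show CyclEq ({m}, J', K') (J \ B, K ∪ B, {m})
      rw [idJB, idKB]; exact ceq_rot _
  have hBne : B.Nonempty := Finset.nonempty_of_ne_empty hBe
  have hCne : C.Nonempty := Finset.nonempty_of_ne_empty hCe
  by_cases hAe : A = ∅
  · by_cases hDe : D = ∅
    · -- mirror image, zero moves
      have h1 : J = K' := by rw [← eJ, ← eK', hAe, hDe, Finset.empty_union, Finset.union_empty]
      have h2 : K = J' := by rw [← eK, ← eJ', hAe, hDe, Finset.empty_union, Finset.union_empty]
      rw [← h1, ← h2]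
      exact ⟨0, by omega, Or.inr (path0 hV)⟩
    · -- one move to mirror : move D from K' side
      have hDne : D.Nonempty := Finset.nonempty_of_ne_empty hDe
      have hWm : IsVertex L ({m}, K', J') :=
        ⟨Finset.singleton_nonempty m, hK'ne, hJ'ne, htri m, hK's, hJ's,
          by simp [Finset.disjoint_singleton_left, dmK'],
          by simp [Finset.disjoint_singleton_left, dmJ'], dJ'K'.symm, by
            rw [← hu']; ext x; simp [Finset.mem_union]; tauto⟩
      have idK'D : K' \ D = J := by
        rw [← eK', Finset.union_sdiff_cancel_right dBD, ← eJ, hAe, Finset.empty_union]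
      have idJ'D : J' ∪ D = K := by
        rw [← eJ', hAe, Finset.empty_union, eK]
      refine ⟨1, by omega, Or.inr (path_snoc (path0 hV) hWm ?_)⟩
      refine adj_rev' hDne (K', J', {m}) (ceq_rot _) ?_ ?_ ?_
      · exact ssub_of_union eK' hBne dBD
      · show ShortSet L (J' ∪ D)
        rw [idJ'D]; exact hKs
      · show CyclEq ({m}, J, K) (K' \ D, J' ∪ D, {m})
        rw [idK'D, idJ'D]; exact ceq_rot _
  have hAne : A.Nonempty := Finset.nonempty_of_ne_empty hAe
  by_cases hDe : D = ∅
  · -- one move to mirror : move A from J to K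
    have hWm : IsVertex L ({m}, K', J') :=
      ⟨Finset.singleton_nonempty m, hK'ne, hJ'ne, htri m, hK's, hJ's,
        by simp [Finset.disjoint_singleton_left, dmK'],
        by simp [Finset.disjoint_singleton_left, dmJ'], dJ'K'.symm, by
          rw [← hu']; ext x; simp [Finset.mem_union]; tauto⟩
    have idJA : J \ A = K' := by
      rw [← eJ, Finset.union_sdiff_cancel_left dAB, ← eK', hDe, Finset.union_empty]
    have idKA : K ∪ A = J' := by
      rw [← eK, hDe, Finset.union_empty, Finset.union_comm, eJ']
    refine ⟨1, by omega, Or.inr (path_snoc (path0 hV) hWm ?_)⟩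
    refine adj_fwd' hAne (J, K, {m}) (ceq_rot _) ?_ ?_ ?_
    · exact (by rw [Finset.union_comm] at eJ; exact ssub_of_union eJ hBne dAB.symm)
    · show ShortSet L (K ∪ A)
      rw [idKA]; exact hJ's
    · show CyclEq ({m}, K', J') (J \ A, K ∪ A, {m})
      rw [idJA, idKA]; exact ceq_rot _
  have hDne : D.Nonempty := Finset.nonempty_of_ne_empty hDe
  -- all four pieces nonempty
  -- sums
  have hsumV : ∑ i, L i = L m + ∑ i ∈ J, L i + ∑ i ∈ K, L i := by
    rw [← hu, Finset.sum_union (Finset.disjoint_union_left.mpr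
      ⟨by simpa [Finset.disjoint_singleton_left] using dmK, dJK⟩),
      Finset.sum_union (by simpa [Finset.disjoint_singleton_left] using dmJ),
      Finset.sum_singleton]
  have hwJ : ∑ i ∈ J, L i = ∑ i ∈ A, L i + ∑ i ∈ B, L i := by
    rw [← eJ, Finset.sum_union dAB]
  have hwK : ∑ i ∈ K, L i = ∑ i ∈ C, L i + ∑ i ∈ D, L i := by
    rw [← eK, Finset.sum_union dCD]
  have hwK' : ∑ i ∈ K', L i = ∑ i ∈ B, L i + ∑ i ∈ D, L i := by
    rw [← eK', Finset.sum_union dBD]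
  by_cases hsA : ShortSet L ({m} ∪ A)
  · -- three moves, to the mirror image
    have hWm : IsVertex L ({m}, K', J') :=
      ⟨Finset.singleton_nonempty m, hK'ne, hJ'ne, htri m, hK's, hJ's,
        by simp [Finset.disjoint_singleton_left, dmK'],
        by simp [Finset.disjoint_singleton_left, dmJ'], dJ'K'.symm, by
          rw [← hu']; ext x; simp [Finset.mem_union]; tauto⟩
    have dmA : Disjoint {m} A := Finset.disjoint_singleton_left.mpr hmA
    have hP1 : IsVertex L ({m} ∪ A, B, K) := by
      refine ⟨⟨m, Finset.mem_union_left _ (Finset.mem_singleton_self m)⟩, hBne, hKne,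
        hsA, short_subset hpos hBJ hJs, hKs, ?_, ?_, ?_, ?_⟩
      · rw [Finset.disjoint_union_left]
        exact ⟨Finset.disjoint_singleton_left.mpr hmB, dAB⟩
      · rw [Finset.disjoint_union_left]
        exact ⟨Finset.disjoint_singleton_left.mpr dmK,
          Finset.disjoint_of_subset_left hAJ dJK⟩
      · exact Finset.disjoint_of_subset_left hBJ dJK
      · apply Finset.eq_univ_iff_forall.mpr
        intro x
        have hx := huV x
        have hxJ : x ∈ J ↔ (x ∈ A ∨ x ∈ B) := by rw [← eJ]; simp [Finset.mem_union]
        simp only [Finset.mem_union, Finset.mem_singleton]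
        tauto
    have hP2 : IsVertex L ({m} ∪ A, K', C) := by
      refine ⟨⟨m, Finset.mem_union_left _ (Finset.mem_singleton_self m)⟩, hK'ne, hCne,
        hsA, hK's, short_subset hpos hCK hKs, ?_, ?_, ?_, ?_⟩
      · rw [Finset.disjoint_union_left]
        exact ⟨Finset.disjoint_singleton_left.mpr dmK',
          by rw [← eK', Finset.disjoint_union_right]; exact ⟨dAB, dAD⟩⟩
      · rw [Finset.disjoint_union_left]
        exact ⟨Finset.disjoint_singleton_left.mpr hmC, dAC⟩
      · rw [← eK', Finset.disjoint_union_left]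
        exact ⟨dBC, dCD.symm⟩
      · apply Finset.eq_univ_iff_forall.mpr
        intro x
        have hx := hall x
        have hxK' : x ∈ K' ↔ (x ∈ B ∨ x ∈ D) := by rw [← eK']; simp [Finset.mem_union]
        simp only [Finset.mem_union, Finset.mem_singleton]
        tauto
    refine ⟨3, by omega, Or.inr
      (path_snoc (path_snoc (path_snoc (path0 hV) hP1 ?_) hP2 ?_) hWm ?_)⟩
    · -- edge 1 : move A from J into the singleton part
      refine adj_rev' hAne ({m} ∪ A, B, K) (ceq_refl _) ?_ ?_ ?_
      · exact ssub_of_union rfl (Finset.singleton_nonempty m) dmA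
      · show ShortSet L (B ∪ A)
        rw [Finset.union_comm, eJ]; exact hJs
      · show CyclEq ({m}, J, K) (({m} ∪ A) \ A, B ∪ A, K)
        rw [Finset.union_sdiff_cancel_right dmA, Finset.union_comm, eJ]
        exact ceq_refl _
    · -- edge 2 : move D from K into K' position
      refine adj_rev' hDne (K', C, {m} ∪ A) (ceq_rot _) ?_ ?_ ?_
      · exact ssub_of_union eK' hBne dBD
      · show ShortSet L (C ∪ D)
        rw [eK]; exact hKs
      · show CyclEq ({m} ∪ A, B, K) (K' \ D, C ∪ D, {m} ∪ A)
        rw [← eK', Finset.union_sdiff_cancel_right dBD, eK]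
        exact ceq_rot _
    · -- edge 3 : move A back out of the singleton part
      refine adj_rev' hAne (J', {m}, K') (ceq_rot2 _) ?_ ?_ ?_
      · exact ssub_of_union (by rw [Finset.union_comm, eJ']) hCne dAC.symm
      · show ShortSet L ({m} ∪ A)
        exact hsA
      · show CyclEq ({m} ∪ A, K', C) (J' \ A, {m} ∪ A, K')
        rw [← eJ', Finset.union_sdiff_cancel_left dAC]
        exact ceq_rot2 _
  · -- two moves, to the target itself
    have hlong : ∑ i, L i < 2 * (L m + ∑ i ∈ A, L i) := by
      rcases short_or hgen ({m} ∪ A) with h | h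
      · exact absurd h hsA
      · rwa [Finset.sum_union (Finset.disjoint_singleton_left.mpr hmA),
          Finset.sum_singleton] at h
    have hKBs : ShortSet L (K ∪ B) := by
      rw [short_iff, Finset.sum_union (Finset.disjoint_of_subset_left hBJ dJK).symm]
      have := (short_iff (L := L) J).mp hJs
      linarith
    have hP1 : IsVertex L ({m}, A, K ∪ B) := by
      refine ⟨Finset.singleton_nonempty m, hAne,
        hKne.mono Finset.subset_union_left, htri m,
        short_subset hpos hAJ hJs, hKBs, ?_, ?_, ?_, ?_⟩
      · exact Finset.disjoint_singleton_left.mpr hmA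
      · rw [Finset.disjoint_union_right]
        exact ⟨Finset.disjoint_singleton_left.mpr dmK, Finset.disjoint_singleton_left.mpr hmB⟩
      · rw [Finset.disjoint_union_right]
        exact ⟨Finset.disjoint_of_subset_left hAJ dJK, dAB⟩
      · apply Finset.eq_univ_iff_forall.mpr
        intro x
        have hx := huV x
        have hxJ : x ∈ J ↔ (x ∈ A ∨ x ∈ B) := by rw [← eJ]; simp [Finset.mem_union]
        simp only [Finset.mem_union, Finset.mem_singleton]
        tauto
    have eKC : K' ∪ C = K ∪ B := by
      rw [← eK', ← eK]
      ext x
      simp only [Finset.mem_union]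
      tauto
    refine ⟨2, by omega, Or.inl
      (path_snoc (path_snoc (path0 hV) hP1 ?_) hW ?_)⟩
    · -- edge 1 : move B from J to K
      refine adj_fwd' hBne (J, K, {m}) (ceq_rot _) ?_ ?_ ?_
      · exact ssub_of_union eJ hAne dAB
      · show ShortSet L (K ∪ B)
        exact hKBs
      · show CyclEq ({m}, A, K ∪ B) (J \ B, K ∪ B, {m})
        rw [← eJ, Finset.union_sdiff_cancel_right dAB]
        exact ceq_rot _
    · -- edge 2 : move C from K ∪ B to J' position
      refine adj_rev' hCne (J', K', {m}) (ceq_rot _) ?_ ?_ ?_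
      · exact ssub_of_union eJ' hAne dAC
      · show ShortSet L (K' ∪ C)
        rw [eKC]; exact hKBs
      · show CyclEq ({m}, A, K ∪ B) (J' \ C, K' ∪ C, {m})
        rw [← eJ', Finset.union_sdiff_cancel_right dAC, eKC]
        exact ceq_rot _

end Link

/-- If `L` is generic and satisfies the triangle inequality, then for
any two vertices `V`, `V'` of `Γ(L)` there is a path of length at most 7 from `V`
either to `V'` or to the mirror image of `V'`. -/
theorem path_to_target_or_mirror (n : ℕ) (hn : 3 ≤ n) (L : Fin n → ℝ)
    (hpos : ∀ i, 0 < L i) (hgen : GenericVec L) (htri : TriangleIneq L) :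
    ∀ V W : LTriple n, IsVertex L V → IsVertex L W →
      ∃ m ≤ 7, GammaPath L m V W ∨ GammaPath L m V (mirrorT W) := by
  intro V W hVv hWv
  obtain ⟨m, -, hm'⟩ := Finset.exists_max_image Finset.univ L
    ⟨⟨0, by omega⟩, Finset.mem_univ _⟩
  have hm : ∀ i, L i ≤ L m := fun i => hm' i (Finset.mem_univ i)
  have locate : ∀ U : LTriple n, IsVertex L U →
      ∃ I J K : Finset (Fin n), CyclEq U (I, J, K) ∧ IsVertex L (I, J, K) ∧ m ∈ I := by
    rintro ⟨a, b, c⟩ hv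
    have hmem : m ∈ a ∪ b ∪ c := hv.2.2.2.2.2.2.2.2.2 ▸ Finset.mem_univ m
    simp only [Finset.mem_union] at hmem
    rcases hmem with (h | h) | h
    · exact ⟨a, b, c, ceq_refl _, hv, h⟩
    · exact ⟨b, c, a, ceq_rot _, vertex_rot hv, h⟩
    · exact ⟨c, a, b, ceq_rot2 _, vertex_rot (vertex_rot hv), h⟩
  obtain ⟨I, J, K, ceqV, hIJK, hmI⟩ := locate V hVv
  obtain ⟨I', J', K', ceqW, hIJK', hmI'⟩ := locate W hWv
  obtain ⟨a, J₁, K₁, ha, hV1, pV0⟩ := reach_m hpos hgen htri hm hIJK hmI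
  obtain ⟨b, J₂, K₂, hb, hV2, pW0⟩ := reach_m hpos hgen htri hm hIJK' hmI'
  have pV : GammaPath L a V ({m}, J₁, K₁) := path_congr ceqV (ceq_refl _) pV0
  have pW : GammaPath L b W ({m}, J₂, K₂) := path_congr ceqW (ceq_refl _) pW0
  obtain ⟨c, hc, q | q⟩ := link_m hpos hgen htri hV1 hV2
  · exact ⟨a + c + b, by omega,
      Or.inl (path_trans (path_trans pV q) (path_symm pW))⟩
  · have pWm : GammaPath L b (J₂, {m}, K₂) (mirrorT W) := path_symm (path_mirror pW)
    have pWm' : GammaPath L b ({m}, K₂, J₂) (mirrorT W) :=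
      path_congr (ceq_rot2 _) (ceq_refl _) pWm
    exact ⟨a + c + b, by omega,
      Or.inr (path_trans (path_trans pV q) pWm')⟩
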